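/- Let r_1,...,r_m be positive real numbers and μ_1,...,μ_m real numbers, and set r = r_1 + ... + r_m. Then ∑_{i<j} r_i r_j (μ_i - μ_j)^2 ≥ (r_1 r_m/(r_1 + r_m)) · r · (μ_1 - μ_m)^2. -/

import Mathlib

open Finset

private lemma langer_key (ra rb rk x y : ℝ) (hra : 0 < ra) (hrb : 0 < rb)
    (hrk : 0 ≤ rk) :
    ra * rb / (ra + rb) * (x + y) ^ 2 * rk ≤ ra * rk * x ^ 2 + rk * rb * y ^ 2 := by
  rw [div_mul_eq_mul_div, div_mul_eq_mul_div, div_le_iff₀ (by linarith)]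
  nlinarith [mul_nonneg hrk (sq_nonneg (ra * x - rb * y))]

/-- Langer's elementary inequality (Lemma 1.3): for positive reals `r i` and reals `μ i`,
with `R = ∑ r i`,
`∑_{i<j} r i * r j * (μ i - μ j)^2 ≥ (r 0 * r (m-1) / (r 0 + r (m-1))) * R * (μ 0 - μ (m-1))^2`. -/
theorem stmt_1 (m : ℕ) (hm : 0 < m) (r μ : Fin m → ℝ)
    (hr : ∀ i, 0 < r i)
    (R : ℝ) (hR : R = ∑ i, r i) :
    r ⟨0, hm⟩ * r ⟨m - 1, Nat.sub_lt hm one_pos⟩ /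
        (r ⟨0, hm⟩ + r ⟨m - 1, Nat.sub_lt hm one_pos⟩) * R *
        (μ ⟨0, hm⟩ - μ ⟨m - 1, Nat.sub_lt hm one_pos⟩) ^ 2
      ≤ ∑ i, ∑ j, if i < j then r i * r j * (μ i - μ j) ^ 2 else 0 := by
  classical
  set a : Fin m := ⟨0, hm⟩ with ha
  set b : Fin m := ⟨m - 1, Nat.sub_lt hm one_pos⟩ with hb
  have hF : ∀ i j : Fin m, 0 ≤ (if i < j then r i * r j * (μ i - μ j) ^ 2 else 0) := by
    intro i j
    split
    · exact mul_nonneg (mul_nonneg (hr i).le (hr j).le) (sq_nonneg _)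
    · exact le_refl 0
  by_cases h2 : 2 ≤ m
  · -- main case
    have hab : a < b := by
      rw [Fin.lt_def]
      simp only [ha, hb]
      omega
    have hd : (0:ℝ) < r a + r b := add_pos (hr a) (hr b)
    set U : Finset (Fin m) := (Finset.univ.erase a).erase b with hU
    have hUmem : ∀ k ∈ U, a < k ∧ k < b := by
      intro k hk
      simp only [hU, Finset.mem_erase, Finset.mem_univ, and_true] at hk
      obtain ⟨hkb, hka⟩ := hk
      rw [Fin.ne_iff_vne] at hkb hka
      constructor <;> rw [Fin.lt_def] <;> simp only [ha, hb] at * <;> omega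
    have hbmem : b ∈ Finset.univ.erase a :=
      Finset.mem_erase.mpr ⟨hab.ne', Finset.mem_univ b⟩
    have hRsplit : R = r a + (r b + ∑ k ∈ U, r k) := by
      rw [hR, ← Finset.add_sum_erase _ _ (Finset.mem_univ a),
        ← Finset.add_sum_erase _ _ hbmem]
    set c : ℝ := r a * r b / (r a + r b) * (μ a - μ b) ^ 2 with hc
    -- Step A: lower bound the double sum
    have stepA : (∑ j, if a < j then r a * r j * (μ a - μ j) ^ 2 else 0)
        + ∑ i ∈ Finset.univ.erase a, (if i < b then r i * r b * (μ i - μ b) ^ 2 else 0)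
        ≤ ∑ i, ∑ j, if i < j then r i * r j * (μ i - μ j) ^ 2 else 0 := by
      rw [← Finset.add_sum_erase _
        (fun i => ∑ j, if i < j then r i * r j * (μ i - μ j) ^ 2 else 0)
        (Finset.mem_univ a)]
      have h := Finset.sum_le_sum (s := Finset.univ.erase a)
        (fun i _ => Finset.single_le_sum (fun j _ => hF i j) (Finset.mem_univ b))
      exact add_le_add_right h _
    -- Step B
    have stepB : (r a * r b * (μ a - μ b) ^ 2)
        + (∑ k ∈ U, if a < k then r a * r k * (μ a - μ k) ^ 2 else 0)
        ≤ ∑ j, if a < j then r a * r j * (μ a - μ j) ^ 2 else 0 := by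
      rw [← Finset.add_sum_erase _ _ (Finset.mem_univ b), if_pos hab]
      have hsub : U ⊆ Finset.univ.erase b := by
        intro x hx
        simp only [hU, Finset.mem_erase, Finset.mem_univ, and_true] at hx ⊢
        exact hx.1
      have h := Finset.sum_le_sum_of_subset_of_nonneg hsub (fun j _ _ => hF a j)
      linarith
    -- Step C
    have stepC : (∑ k ∈ U, if k < b then r k * r b * (μ k - μ b) ^ 2 else 0)
        ≤ ∑ i ∈ Finset.univ.erase a, (if i < b then r i * r b * (μ i - μ b) ^ 2 else 0) := by
      refine Finset.sum_le_sum_of_subset_of_nonneg ?_ (fun j _ _ => hF j b)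
      exact Finset.erase_subset _ _
    -- Step D: pointwise bound on U
    have stepD : ∀ k ∈ U, c * r k ≤
        (if a < k then r a * r k * (μ a - μ k) ^ 2 else 0)
        + (if k < b then r k * r b * (μ k - μ b) ^ 2 else 0) := by
      intro k hk
      obtain ⟨h1, h2⟩ := hUmem k hk
      rw [if_pos h1, if_pos h2]
      have := langer_key (r a) (r b) (r k) (μ a - μ k) (μ k - μ b) (hr a) (hr b) (hr k).le
      calc c * r k = r a * r b / (r a + r b) * ((μ a - μ k) + (μ k - μ b)) ^ 2 * r k := by
            rw [hc]; ring_nf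
        _ ≤ r a * r k * (μ a - μ k) ^ 2 + r k * r b * (μ k - μ b) ^ 2 := this
    -- put everything together
    calc r a * r b / (r a + r b) * R * (μ a - μ b) ^ 2
        = c * (r a + r b) + ∑ k ∈ U, c * r k := by
          rw [hRsplit, ← Finset.mul_sum, hc]; ring
      _ = r a * r b * (μ a - μ b) ^ 2 + ∑ k ∈ U, c * r k := by
          have h : c * (r a + r b) = r a * r b * (μ a - μ b) ^ 2 := by
            rw [hc]; field_simp
          rw [h]
      _ ≤ (r a * r b * (μ a - μ b) ^ 2)
            + ((∑ k ∈ U, if a < k then r a * r k * (μ a - μ k) ^ 2 else 0)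
              + ∑ k ∈ U, if k < b then r k * r b * (μ k - μ b) ^ 2 else 0) := by
          rw [← Finset.sum_add_distrib]
          exact add_le_add_right (Finset.sum_le_sum stepD) _
      _ ≤ (∑ j, if a < j then r a * r j * (μ a - μ j) ^ 2 else 0)
            + ∑ i ∈ Finset.univ.erase a, (if i < b then r i * r b * (μ i - μ b) ^ 2 else 0) := by
          rw [← add_assoc]
          exact add_le_add stepB stepC
      _ ≤ _ := stepA
  · -- m = 1
    have hm1 : m = 1 := by omega
    subst hm1
    have hba : b = a := by
      rw [ha, hb]
      rfl
    rw [hba, sub_self]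
    have h0 : ∀ x : ℝ, x * (0:ℝ) ^ 2 = 0 := fun x => by ring
    rw [h0]
    exact Finset.sum_nonneg fun i _ => Finset.sum_nonneg fun j _ => hF i j
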